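/- arXiv:1405.7443 — 3 statements merged into one kernel-verified Lean document; each statement's English description precedes it below -/
import Mathlib

section
/- Nonalgebraicity of μ-nonforking: If p ∈ S(N) does not μ-fork over M (with M ≤ N in K_μ) and p ↾ M is not algebraic, then p is not algebraic. -/
/-!
Abstract framework: an axiomatic presentation of an abstract elementary class (AEC)
together with its Galois types, K-embeddings, isomorphisms, universal extensions,
limit models, splitting/forking data and pre-frames, following
"Building independence relations in abstract elementary classes" (Vasey).
-/

universe u

/-- An axiomatic presentation of an abstract elementary class `K`, together with its
Galois types.  `le` is the strong substructure relation `≤` of the AEC, `Emb M N`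
(resp. `EmbOver M₀ M N`) asserts the existence of a `K`-embedding of `M` into `N`
(resp. one fixing `M₀` pointwise), `S M` is the set of Galois types of single elements
over `M`, `restrict` is restriction of types, and `tp h a` is the Galois type
`gtp (a / M; N)` of `a ∈ N` over `M ≤ N`.  `Sp M` (resp. `Sq M`) is the set of Galois
types of pairs (resp. of pairs of pairs, i.e. 4-tuples) over `M`. -/
structure AEC : Type (u + 2) where
  Model : Type (u + 1)
  carrier : Model → Type u
  le : Model → Model → Prop
  le_refl : ∀ M, le M M
  le_trans : ∀ {M N P : Model}, le M N → le N P → le M P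
  le_antisymm : ∀ {M N : Model}, le M N → le N M → M = N
  /-- the inclusion of carriers along `≤` -/
  incl : ∀ {M N : Model}, le M N → carrier M → carrier N
  /-- the Löwenheim–Skolem number `LS (K)` -/
  LS : Cardinal.{u}
  aleph0_le_LS : Cardinal.aleph0 ≤ LS
  /-- downward Löwenheim–Skolem axiom -/
  dls : ∀ (M : Model) (c : Cardinal.{u}), LS ≤ c → c ≤ Cardinal.mk (carrier M) →
    ∃ M' : Model, le M' M ∧ Cardinal.mk (carrier M') = c
  /-- `EmbOver M₀ M N`: there is a `K`-embedding `f : M → N` over `M₀` -/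
  EmbOver : Model → Model → Model → Prop
  /-- `Emb M N`: there is a `K`-embedding `f : M → N` -/
  Emb : Model → Model → Prop
  emb_of_le : ∀ {M N : Model}, le M N → Emb M N
  emb_trans : ∀ {M N P : Model}, Emb M N → Emb N P → Emb M P
  embOver_of_le : ∀ {M₀ M N : Model}, le M₀ M → le M N → EmbOver M₀ M N
  embOver_le : ∀ {M₀ M N N' : Model}, EmbOver M₀ M N → le N N' → EmbOver M₀ M N'
  emb_of_embOver : ∀ {M₀ M N : Model}, EmbOver M₀ M N → Emb M N
  /-- `Iso M N`: `M` and `N` are isomorphic -/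
  Iso : Model → Model → Prop
  iso_refl : ∀ M, Iso M M
  iso_symm : ∀ {M N : Model}, Iso M N → Iso N M
  /-- Galois types of single elements over `M` -/
  S : Model → Type u
  restrict : ∀ {M N : Model}, le M N → S N → S M
  tp : ∀ {M N : Model}, le M N → carrier N → S M
  restrict_tp : ∀ {M M' N : Model} (h : le M M') (h' : le M' N) (a : carrier N),
    restrict h (tp h' a) = tp (le_trans h h') a
  restrict_restrict : ∀ {M M' N : Model} (h : le M M') (h' : le M' N) (p : S N),
    restrict h (restrict h' p) = restrict (le_trans h h') p
  /-- Galois types of pairs over `M` -/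
  Sp : Model → Type u
  tpPair : ∀ {M N : Model}, le M N → carrier N × carrier N → Sp M
  /-- Galois types of 4-tuples (pairs of pairs) over `M` -/
  Sq : Model → Type u
  tpPairPair : ∀ {M N : Model}, le M N → carrier N × carrier N → carrier N × carrier N → Sq M

/-- `F` is an interval of cardinals of the form `[lam, θ)` with minimum `lam`. -/
def CardinalInterval (F : Set Cardinal.{u}) (lam : Cardinal.{u}) : Prop :=
  lam ∈ F ∧ (∀ c ∈ F, lam ≤ c) ∧ ∀ ⦃c c' : Cardinal.{u}⦄, c ∈ F → lam ≤ c' → c' ≤ c → c' ∈ F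

namespace AEC

variable (K : AEC.{u})

/-- The cardinality `‖M‖` of a model. -/
def card (M : K.Model) : Cardinal.{u} := Cardinal.mk (K.carrier M)

/-- `M < N`: strict strong substructure. -/
def lt (M N : K.Model) : Prop := K.le M N ∧ M ≠ N

/-- `N` is universal over `M`: `M < N` and every extension `M'` of `M` with
`‖M'‖ = ‖M‖` embeds into `N` over `M`. -/
def UnivOver (N M : K.Model) : Prop :=
  K.lt M N ∧ ∀ M' : K.Model, K.le M M' → K.card M' = K.card M → K.EmbOver M M' N

/-- `K_F` has amalgamation. -/
def Amalgamation (F : Set Cardinal.{u}) : Prop :=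
  ∀ M₀ M₁ M₂ : K.Model, K.card M₀ ∈ F → K.card M₁ ∈ F → K.card M₂ ∈ F →
    K.le M₀ M₁ → K.le M₀ M₂ →
    ∃ N : K.Model, K.card N ∈ F ∧ K.EmbOver M₀ M₁ N ∧ K.EmbOver M₀ M₂ N

/-- `K_F` has joint embedding. -/
def JointEmbedding (F : Set Cardinal.{u}) : Prop :=
  ∀ M₁ M₂ : K.Model, K.card M₁ ∈ F → K.card M₂ ∈ F →
    ∃ N : K.Model, K.card N ∈ F ∧ K.Emb M₁ N ∧ K.Emb M₂ N

/-- `K_F` has no maximal models. -/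
def NoMaxModels (F : Set Cardinal.{u}) : Prop :=
  ∀ M : K.Model, K.card M ∈ F → ∃ N : K.Model, K.card N ∈ F ∧ K.lt M N

/-- A type `p ∈ S (N)` is algebraic if it is realized by an element of `N`. -/
def Algebraic {N : K.Model} (p : K.S N) : Prop :=
  ∃ a : K.carrier N, K.tp (K.le_refl N) a = p

/-- `K` is stable in `c`: `|S (M)| ≤ c` for every `M` of size `c`. -/
def Stable (c : Cardinal.{u}) : Prop :=
  ∀ M : K.Model, K.card M = c → Cardinal.mk (K.S M) ≤ c

/-- `K` is 2-stable in `c`: `|S² (M)| ≤ c` for every `M` of size `c`. -/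
def Stable2 (c : Cardinal.{u}) : Prop :=
  ∀ M : K.Model, K.card M = c → Cardinal.mk (K.Sp M) ≤ c

/-- `M` is `μ⁺`-model-homogeneous: every `M₀ ≤ M` with `‖M₀‖ ≤ μ` has `M`
universal over it. -/
def MHomog (μ : Cardinal.{u}) (M : K.Model) : Prop :=
  ∀ M₀ : K.Model, K.le M₀ M → K.card M₀ ≤ μ → K.UnivOver M M₀

/-- `N` is `(μ, δ)`-limit over `M`: there is a `<_univ`-increasing chain
`(M_i)_{i ≤ δ}` in `K_μ` with `M_0 = M`, `M_δ = N`, continuous at `δ` if `δ` is limit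
(the union condition is expressed by `f δ` being a least upper bound of the chain). -/
def IsLimitOver (μ : Cardinal.{u}) (δ : Ordinal.{u}) (N M : K.Model) : Prop :=
  K.card M = μ ∧ K.card N = μ ∧
  ∃ f : Ordinal.{u} → K.Model,
    f 0 = M ∧ f δ = N ∧
    (∀ i, i ≤ δ → K.card (f i) = μ) ∧
    (∀ i j, i < j → j ≤ δ → K.le (f i) (f j)) ∧
    (∀ i, i + 1 ≤ δ → K.UnivOver (f (i + 1)) (f i)) ∧
    (Order.IsSuccLimit δ → ∀ P : K.Model, (∀ i, i < δ → K.le (f i) P) → K.le (f δ) P)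

/-- `K` is `(μ, lamt)`-tame: distinct types over a model of size `≤ lamt` differ on
some `≤`-substructure of size `≤ μ`. -/
def Tame (μ lamt : Cardinal.{u}) : Prop :=
  ∀ M : K.Model, K.card M ≤ lamt → ∀ p q : K.S M, p ≠ q →
    ∃ (M₀ : K.Model) (h : K.le M₀ M), K.card M₀ ≤ μ ∧ K.restrict h p ≠ K.restrict h q

section Forking

variable (NoSplit : Cardinal.{u} → (M N : K.Model) → K.S N → Prop)

/-- `p ∈ S (N)` explicitly does not `μ`-fork over `(M₀, M)`:
`M₀ <_univ M ≤ N`, `M₀, M ∈ K_μ`, and `p` does not `μ`-split over `M₀`.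
Here `NoSplit μ M₀ N p` means "`p ∈ S (N)` does not `μ`-split over `M₀`". -/
def ExpNF (μ : Cardinal.{u}) (M₀ M N : K.Model) (p : K.S N) : Prop :=
  K.card M₀ = μ ∧ K.card M = μ ∧ K.UnivOver M M₀ ∧ K.le M N ∧ NoSplit μ M₀ N p

/-- `p ∈ S (N)` does not `μ`-fork over `M`: it explicitly does not `μ`-fork over
`(M₀, M)` for some `M₀`. -/
def NFork (μ : Cardinal.{u}) (M N : K.Model) (p : K.S N) : Prop :=
  ∃ M₀ : K.Model, K.ExpNF NoSplit μ M₀ M N p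

/-- `p ∈ S^{na} (N)` does not `(≥ μ)`-fork over `M`: there is `M' ≤ M` of size `μ`
such that for every `N' ∈ K_μ` with `M' ≤ N' ≤ N`, `p ↾ N'` does not `μ`-fork over
`M'`.  (This is only defined for nonalgebraic types.) -/
def GeNF (μ : Cardinal.{u}) (M N : K.Model) (p : K.S N) : Prop :=
  K.le M N ∧ ¬ K.Algebraic p ∧
  ∃ M' : K.Model, K.le M' M ∧ K.card M' = μ ∧
    ∀ (N' : K.Model) (hN' : K.le N' N), K.le M' N' → K.card N' = μ →
      K.NFork NoSplit μ M' N' (K.restrict hN' p)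

end Forking

/-- `K` has the `(2, χ)`-order property of length `γ`. -/
def HasOP2 (χ : Cardinal.{u}) (γ : Ordinal.{u}) : Prop :=
  ∃ (M N : K.Model) (h : K.le M N) (a : Ordinal.{u} → K.carrier N × K.carrier N),
    K.card M ≤ χ ∧
    ∀ i₀ i₁ j₀ j₁ : Ordinal.{u}, i₀ < i₁ → i₁ < γ → j₀ < j₁ → j₁ < γ →
      K.tpPairPair h (a i₀) (a i₁) ≠ K.tpPairPair h (a j₁) (a j₀)

end AEC

/-- A pre-`F`-frame `s = (K, ⌣, S^{bs})`: a class of basic (nonalgebraic) types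
together with an abstract nonforking relation `NF M₀ N p` ("`p ∈ S (N)` does not
`s`-fork over `M₀`") satisfying invariance (built into the type-based presentation),
monotonicity, and "nonforking types are basic". -/
structure PreFrame (K : AEC.{u}) (F : Set Cardinal.{u}) where
  Basic : (M : K.Model) → K.S M → Prop
  NF : (M₀ N : K.Model) → K.S N → Prop
  nf_le : ∀ {M₀ N : K.Model} {p : K.S N}, NF M₀ N p → K.le M₀ N
  nf_card : ∀ {M₀ N : K.Model} {p : K.S N}, NF M₀ N p → K.card M₀ ∈ F ∧ K.card N ∈ F
  basic_nonalg : ∀ {M : K.Model} {p : K.S M}, Basic M p → ¬ K.Algebraic p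
  monotonicity : ∀ {M₀ M₁ N₁ N : K.Model} (h01 : K.le M₀ M₁) (h1 : K.le M₁ N₁)
    (hN : K.le N₁ N) {p : K.S N}, K.card M₁ ∈ F → K.card N₁ ∈ F →
    NF M₀ N p → NF M₁ N₁ (K.restrict hN p)
  nf_basic : ∀ {M : K.Model} {p : K.S M}, NF M M p → Basic M p

namespace PreFrame

variable {K : AEC.{u}} {F : Set Cardinal.{u}} (s : PreFrame K F)

/-- Uniqueness of nonforking extensions. -/
def Uniqueness : Prop :=
  ∀ (M N : K.Model) (h : K.le M N) (p q : K.S N),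
    s.NF M N p → s.NF M N q → K.restrict h p = K.restrict h q → p = q

/-- Existence: basic types do not fork over their own domain. -/
def Existence : Prop := ∀ (M : K.Model) (p : K.S M), s.Basic M p → s.NF M M p

/-- Extension of nonforking types. -/
def Extension : Prop :=
  ∀ (M N N' : K.Model) (h : K.le N N') (p : K.S N), K.card N' ∈ F →
    s.NF M N p → ∃ q : K.S N', K.restrict h q = p ∧ s.NF M N' q

/-- Transitivity of nonforking. -/
def Transitivity : Prop :=
  ∀ (M₀ M₁ M₂ : K.Model) (h01 : K.le M₀ M₁) (h12 : K.le M₁ M₂) (p : K.S M₂),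
    s.NF M₁ M₂ p → s.NF M₀ M₁ (K.restrict h12 p) → s.NF M₀ M₂ p

/-- Local character: over the union of an increasing chain in `K_F`, every basic type
does not fork over some member of the chain.  The union of the chain is presented as
a least upper bound. -/
def LocalChar : Prop :=
  ∀ (δ : Ordinal.{u}), Order.IsSuccLimit δ → ∀ f : Ordinal.{u} → K.Model,
    (∀ i, i ≤ δ → K.card (f i) ∈ F) →
    (∀ i j, i < j → j ≤ δ → K.le (f i) (f j)) →
    (∀ P : K.Model, (∀ i, i < δ → K.le (f i) P) → K.le (f δ) P) →
    ∀ p : K.S (f δ), s.Basic (f δ) p → ∃ i, i < δ ∧ s.NF (f i) (f δ) p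

/-- Continuity of nonforking along increasing chains in `K_F`. -/
def Continuity : Prop :=
  ∀ (δ : Ordinal.{u}), Order.IsSuccLimit δ → ∀ f : Ordinal.{u} → K.Model,
    (∀ i, i ≤ δ → K.card (f i) ∈ F) →
    (∀ i j, i < j → j ≤ δ → K.le (f i) (f j)) →
    (∀ P : K.Model, (∀ i, i < δ → K.le (f i) P) → K.le (f δ) P) →
    ∀ p : K.S (f δ),
      (∀ i (hi : i < δ) (hle : K.le (f i) (f δ)), s.NF (f 0) (f i) (K.restrict hle p)) →
      s.NF (f 0) (f δ) p

/-- Density of basic types. -/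
def Density : Prop :=
  ∀ (M N : K.Model) (h : K.le M N), K.card M ∈ F → K.card N ∈ F → K.lt M N →
    ∃ a : K.carrier N, s.Basic M (K.tp h a)

/-- bs-stability: `|S^{bs} (M)| ≤ ‖M‖` for `M ∈ K_F`. -/
def BsStable : Prop :=
  ∀ M : K.Model, K.card M ∈ F → Cardinal.mk {p : K.S M // s.Basic M p} ≤ K.card M

/-- The symmetry property of the frame. -/
def Symmetry : Prop :=
  ∀ (M₀ M₂ N : K.Model) (h02 : K.le M₀ M₂) (h2N : K.le M₂ N)
    (a₁ : K.carrier N) (a₂ : K.carrier M₂),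
    s.NF M₀ M₂ (K.tp h2N a₁) → s.Basic M₀ (K.tp h02 a₂) →
    ∃ (M₁ N' : K.Model) (h01 : K.le M₀ M₁) (hNN' : K.le N N') (h1N' : K.le M₁ N'),
      (∃ b : K.carrier M₁, K.incl h1N' b = K.incl hNN' a₁) ∧
      s.NF M₀ M₁ (K.tp h1N' (K.incl hNN' (K.incl h2N a₂)))

/-- A good⁻ `F`-frame: all the properties of a good frame except possibly symmetry
and bs-stability. -/
def GoodMinus : Prop :=
  K.Amalgamation F ∧ K.JointEmbedding F ∧ K.NoMaxModels F ∧
  s.Density ∧ s.Existence ∧ s.Extension ∧ s.Uniqueness ∧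
  s.LocalChar ∧ s.Continuity ∧ s.Transitivity

end PreFrame

/-- Nonalgebraicity of `μ`-nonforking: if `p ∈ S (N)` does not
`μ`-fork over `M` (with `M ≤ N` in `K_μ`) and `p ↾ M` is not algebraic, then `p` is
not algebraic.  Weak uniqueness and weak extension of nonsplitting (the latter
preserving nonalgebraicity), as well as monotonicity of nonsplitting, are assumed. -/
theorem nonalgebraicity_of_nonforking (K : AEC.{u}) (μ : Cardinal.{u}) (hμ : K.LS ≤ μ)
    (NoSplit : Cardinal.{u} → (M N : K.Model) → K.S N → Prop)
    (hamalg : K.Amalgamation {μ})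
    (split_mono : ∀ (M₀ M₀' N' N : K.Model) (h0 : K.le M₀ M₀') (h0' : K.le M₀' N')
      (hN : K.le N' N) (p : K.S N),
      NoSplit μ M₀ N p → NoSplit μ M₀' N' (K.restrict hN p))
    (weak_uniqueness : ∀ (M₀ M N : K.Model) (hMN : K.le M N),
      K.card M₀ = μ → K.card M = μ → K.card N = μ → K.UnivOver M M₀ →
      ∀ p₁ p₂ : K.S N, NoSplit μ M₀ N p₁ → NoSplit μ M₀ N p₂ →
      K.restrict hMN p₁ = K.restrict hMN p₂ → p₁ = p₂)
    (weak_extension : ∀ (M₀ M N : K.Model) (hMN : K.le M N),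
      K.card M₀ = μ → K.card M = μ → K.card N = μ → K.UnivOver M M₀ →
      ∀ p : K.S M, NoSplit μ M₀ M p →
      ∃ q : K.S N, K.restrict hMN q = p ∧ NoSplit μ M₀ N q ∧
        (¬ K.Algebraic p → ¬ K.Algebraic q))
    (M N : K.Model) (hMN : K.le M N) (cM : K.card M = μ) (cN : K.card N = μ)
    (p : K.S N)
    (hnf : K.NFork NoSplit μ M N p)
    (hna : ¬ K.Algebraic (K.restrict hMN p)) :
    ¬ K.Algebraic p := by
  obtain ⟨M₀, cM₀, cM', huniv, hMN', hns⟩ := hnf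
  have h0M : K.le M₀ M := huniv.1.1
  -- p ↾ M does not split over M₀
  have hnsM : NoSplit μ M₀ M (K.restrict hMN p) :=
    split_mono M₀ M₀ M N (K.le_refl M₀) h0M hMN p hns
  -- extend p ↾ M to a nonsplitting, nonalgebraic q over N
  obtain ⟨q, hqres, hqns, hqna⟩ :=
    weak_extension M₀ M N hMN cM₀ cM cN huniv (K.restrict hMN p) hnsM
  -- by weak uniqueness, q = p
  have : q = p :=
    weak_uniqueness M₀ M N hMN cM₀ cM cN huniv q p hqns hns hqres
  exact this ▸ hqna hna
end

section
/- Transitivity of explicit μ-nonforking: If M₁ ≤ M₂ ≤ M₃ in K_μ, p ∈ S(M₃), p ↾ M₂ explicitly does not μ-fork over (M₀, M₁), and p explicitly does not μ-fork over (M₀', M₂) for some M₀' ≥ M₀, then p explicitly does not μ-fork over (M₀, M₁). -/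
/-!
Abstract framework: an axiomatic presentation of an abstract elementary class (AEC)
together with its Galois types, K-embeddings, isomorphisms, universal extensions,
limit models, splitting/forking data and pre-frames, following
"Building independence relations in abstract elementary classes" (Vasey).
-/

universe u

/-- Transitivity of explicit `μ`-nonforking: if `M₁ ≤ M₂ ≤ M₃` in
`K_μ`, `p ∈ S (M₃)`, `p ↾ M₂` explicitly does not `μ`-fork over `(M₀, M₁)`, and `p`
explicitly does not `μ`-fork over `(M₀', M₂)` for some `M₀' ≥ M₀`, then `p`
explicitly does not `μ`-fork over `(M₀, M₁)`.  Weak uniqueness, weak extension, and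
monotonicity of `μ`-nonsplitting are assumed. -/
theorem expNF_transitivity (K : AEC.{u}) (μ : Cardinal.{u}) (hμ : K.LS ≤ μ)
    (NoSplit : Cardinal.{u} → (M N : K.Model) → K.S N → Prop)
    (hamalg : K.Amalgamation {μ})
    (split_mono : ∀ (M₀ M₀' N' N : K.Model) (h0 : K.le M₀ M₀') (h0' : K.le M₀' N')
      (hN : K.le N' N) (p : K.S N),
      NoSplit μ M₀ N p → NoSplit μ M₀' N' (K.restrict hN p))
    (weak_uniqueness : ∀ (M₀ M N : K.Model) (hMN : K.le M N),
      K.card M₀ = μ → K.card M = μ → K.card N = μ → K.UnivOver M M₀ →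
      ∀ p₁ p₂ : K.S N, NoSplit μ M₀ N p₁ → NoSplit μ M₀ N p₂ →
      K.restrict hMN p₁ = K.restrict hMN p₂ → p₁ = p₂)
    (weak_extension : ∀ (M₀ M N : K.Model) (hMN : K.le M N),
      K.card M₀ = μ → K.card M = μ → K.card N = μ → K.UnivOver M M₀ →
      ∀ p : K.S M, NoSplit μ M₀ M p →
      ∃ q : K.S N, K.restrict hMN q = p ∧ NoSplit μ M₀ N q)
    (M₀ M₀' M₁ M₂ M₃ : K.Model) (c3 : K.card M₃ = μ)
    (h12 : K.le M₁ M₂) (h23 : K.le M₂ M₃) (h00' : K.le M₀ M₀')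
    (p : K.S M₃)
    (h1 : K.ExpNF NoSplit μ M₀ M₁ M₂ (K.restrict h23 p))
    (h2 : K.ExpNF NoSplit μ M₀' M₂ M₃ p) :
    K.ExpNF NoSplit μ M₀ M₁ M₃ p := by
  obtain ⟨c0, c1, u10, h12', ns1⟩ := h1
  obtain ⟨c0', c2, u2, h23', ns2⟩ := h2
  have h01 : K.le M₀ M₁ := u10.1.1
  have h0'2 : K.le M₀' M₂ := u2.1.1
  have h13 : K.le M₁ M₃ := K.le_trans h12 h23
  -- restriction of p to M₁ does not split over M₀
  have nsr : NoSplit μ M₀ M₁ (K.restrict h12 (K.restrict h23 p)) :=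
    split_mono M₀ M₀ M₁ M₂ (K.le_refl M₀) h01 h12 _ ns1
  -- extend it to a nonsplitting type q over M₃
  obtain ⟨q, hq1, hq2⟩ :=
    weak_extension M₀ M₁ M₃ h13 c0 c1 c3 u10 _ nsr
  -- q and p agree on M₂ (weak uniqueness over (M₀, M₁, M₂))
  have nsq2 : NoSplit μ M₀ M₂ (K.restrict h23 q) :=
    split_mono M₀ M₀ M₂ M₃ (K.le_refl M₀) (K.le_trans h01 h12) h23 q hq2
  have eq2 : K.restrict h23 q = K.restrict h23 p := by
    refine weak_uniqueness M₀ M₁ M₂ h12 c0 c1 c2 u10 _ _ nsq2 ns1 ?_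
    rw [K.restrict_restrict]
    exact hq1
  -- q = p (weak uniqueness over (M₀', M₂, M₃)), modulo a trivial restriction
  have nsq' : NoSplit μ M₀' M₃ (K.restrict (K.le_refl M₃) q) :=
    split_mono M₀ M₀' M₃ M₃ h00' (K.le_trans h0'2 h23) (K.le_refl M₃) q hq2
  have eqf : K.restrict (K.le_refl M₃) q = p := by
    refine weak_uniqueness M₀' M₂ M₃ h23 c0' c2 c3 u2 _ _ nsq' ns2 ?_
    rw [K.restrict_restrict]
    exact eq2
  have nsfin : NoSplit μ M₀ M₃ (K.restrict (K.le_refl M₃) q) :=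
    split_mono M₀ M₀ M₃ M₃ (K.le_refl M₀) (K.le_trans h01 h13) (K.le_refl M₃) q hq2
  exact ⟨c0, c1, u10, h13, eqf ▸ nsfin⟩
end

section
/- Stability transfer via nonforking: Suppose every model of K_λ embeds into a union of an increasing chain (M_i)_{i<λ} of μ⁺-model-homogeneous models of size < λ over which nonforking satisfies κ-local character with cf(λ) ≥ κ, each K_{‖M_i‖} is eventually stable, and uniqueness of nonforking extensions over μ⁺-model-homogeneous bases holds. Then K is stable in λ. -/
/-!
Abstract framework: an axiomatic presentation of an abstract elementary class (AEC)
together with its Galois types, K-embeddings, isomorphisms, universal extensions,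
limit models, splitting/forking data and pre-frames, following
"Building independence relations in abstract elementary classes" (Vasey).
-/

universe u

/-- Stability transfer via nonforking: suppose every model of
`K_lam` embeds into the union of an increasing chain `(M_i)_{i < lam}` of
`μ⁺`-model-homogeneous models of size `< lam` over which `(≥ μ)`-nonforking
satisfies `κ`-local character with `cf (lam) ≥ κ`, each `K_{‖M_i‖}` is eventually
stable (there are unboundedly many `i` with `K` stable in `‖M_i‖`), and uniqueness
of nonforking extensions over `μ⁺`-model-homogeneous bases holds.  Then `K` is
stable in `lam`. -/
theorem stability_transfer (K : AEC.{u})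
    (NoSplit : Cardinal.{u} → (M N : K.Model) → K.S N → Prop)
    (μ κ lam : Cardinal.{u}) (hLS : K.LS ≤ μ) (hμlam : μ < lam)
    (hamalg : K.Amalgamation Set.univ)
    (hcof : κ ≤ lam.ord.cof)
    (hembtypes : ∀ M N : K.Model, K.Emb M N →
      Cardinal.mk (K.S M) ≤ Cardinal.mk (K.S N))
    (huniq : ∀ (M N : K.Model) (h : K.le M N) (p q : K.S N), K.MHomog μ M →
      K.GeNF NoSplit μ M N p → K.GeNF NoSplit μ M N q →
      K.restrict h p = K.restrict h q → p = q)
    (hresolve : ∀ M : K.Model, K.card M = lam →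
      ∃ (f : Ordinal.{u} → K.Model) (N : K.Model),
        (∀ i, i < lam.ord → K.MHomog μ (f i)) ∧
        (∀ i, i < lam.ord → K.card (f i) < lam) ∧
        (∀ i, i < lam.ord → ∃ j, i ≤ j ∧ j < lam.ord ∧ K.Stable (K.card (f j))) ∧
        (∀ i j, i < j → j < lam.ord → K.le (f i) (f j)) ∧
        (∀ i, i < lam.ord → K.le (f i) N) ∧
        (∀ P : K.Model, (∀ i, i < lam.ord → K.le (f i) P) → K.le N P) ∧
        K.card N = lam ∧ K.Emb M N ∧
        (∀ p : K.S N, ¬ K.Algebraic p →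
          ∃ i, i < lam.ord ∧ K.GeNF NoSplit μ (f i) N p)) :
    K.Stable lam := by
  intro M hM
  obtain ⟨f, N, h1, h2, h3, h4, h5, h6, h7, h8, h9⟩ := hresolve M hM
  have hlam : Cardinal.aleph0 ≤ lam :=
    le_of_lt (lt_of_le_of_lt (le_trans K.aleph0_le_LS hLS) hμlam)
  refine le_trans (hembtypes M N h8) ?_
  set o := lam.ord with ho
  -- algebraic types inject into the carrier of N
  have halg : Cardinal.mk {p : K.S N // K.Algebraic p} ≤ lam := by
    have hex : ∀ p : {p : K.S N // K.Algebraic p},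
        ∃ a : K.carrier N, K.tp (K.le_refl N) a = p.val := fun p => p.property
    choose g hg using hex
    have hginj : Function.Injective g := by
      intro p q hpq
      apply Subtype.ext
      rw [← hg p, ← hg q, hpq]
    calc Cardinal.mk {p : K.S N // K.Algebraic p} ≤ Cardinal.mk (K.carrier N) :=
          Cardinal.mk_le_of_injective hginj
      _ = lam := h7
  -- nonalgebraic types
  have hna : Cardinal.mk {p : K.S N // ¬ K.Algebraic p} ≤ lam := by
    set e := Ordinal.ToType.mk (o := o) with he
    set idx : o.ToType → Ordinal.{u} := fun x => (e.symm x : Ordinal.{u}) with hidxdef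
    have hidxlt : ∀ x, idx x < o := fun x => (e.symm x).2
    set J := {x : o.ToType // K.Stable (K.card (f (idx x)))} with hJ
    have key : ∀ p : {p : K.S N // ¬ K.Algebraic p},
        ∃ x : J, K.GeNF NoSplit μ (f (idx x.val)) N p.val := by
      intro p
      obtain ⟨i, hio, hGe⟩ := h9 p.val p.property
      obtain ⟨j, hij, hjo, hst⟩ := h3 i hio
      have hGej : K.GeNF NoSplit μ (f j) N p.val := by
        rcases eq_or_lt_of_le hij with rfl | hlt
        · exact hGe
        · obtain ⟨hMN, hnal, M', hM', hc, hall⟩ := hGe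
          exact ⟨h5 j hjo, hnal, M', K.le_trans hM' (h4 i j hlt hjo), hc, hall⟩
      have hx : idx (e ⟨j, hjo⟩) = j := by
        simp [hidxdef]
      refine ⟨⟨e ⟨j, hjo⟩, ?_⟩, ?_⟩
      · rw [hx]; exact hst
      · show K.GeNF NoSplit μ (f (idx (e ⟨j, hjo⟩))) N p.val
        rw [hx]; exact hGej
    set x : {p : K.S N // ¬ K.Algebraic p} → J := fun p => (key p).choose with hxdef
    have hxspec : ∀ p, K.GeNF NoSplit μ (f (idx (x p).val)) N p.val :=
      fun p => (key p).choose_spec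
    set F : {p : K.S N // ¬ K.Algebraic p} → Σ y : J, K.S (f (idx y.val)) :=
      fun p => ⟨x p, K.restrict (h5 (idx (x p).val) (hidxlt (x p).val)) p.val⟩ with hFdef
    have hFinj : Function.Injective F := by
      intro p q hpq
      have hfst : x p = x q := congrArg Sigma.fst hpq
      have hsnd : HEq (K.restrict (h5 (idx (x p).val) (hidxlt (x p).val)) p.val)
          (K.restrict (h5 (idx (x q).val) (hidxlt (x q).val)) q.val) :=
        (Sigma.ext_iff.mp hpq).2
      have hr : K.restrict (h5 (idx (x q).val) (hidxlt (x q).val)) p.val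
              = K.restrict (h5 (idx (x q).val) (hidxlt (x q).val)) q.val := by
        rw [hfst] at hsnd
        exact eq_of_heq hsnd
      have hGp := hxspec p
      rw [hfst] at hGp
      exact Subtype.ext (huniq (f (idx (x q).val)) N
        (h5 (idx (x q).val) (hidxlt (x q).val)) p.val q.val
        (h1 (idx (x q).val) (hidxlt (x q).val)) hGp (hxspec q) hr)
    have hsig : Cardinal.mk (Σ y : J, K.S (f (idx y.val))) ≤ lam := by
      rw [Cardinal.mk_sigma]
      have hle : ∀ y : J, Cardinal.mk (K.S (f (idx y.val))) ≤ lam := by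
        intro y
        exact le_of_lt (lt_of_le_of_lt (y.property (f (idx y.val)) rfl)
          (h2 (idx y.val) (hidxlt y.val)))
      calc Cardinal.sum (fun y : J => Cardinal.mk (K.S (f (idx y.val))))
          ≤ Cardinal.sum (fun _ : J => lam) := Cardinal.sum_le_sum _ _ hle
        _ = Cardinal.mk J * lam := Cardinal.sum_const' J lam
        _ ≤ lam * lam := by
            refine mul_le_mul' ?_ le_rfl
            calc Cardinal.mk J ≤ Cardinal.mk o.ToType := Cardinal.mk_subtype_le _
              _ = o.card := Cardinal.mk_toType o
              _ = lam := Cardinal.card_ord lam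
        _ = lam := Cardinal.mul_eq_self hlam
    exact le_trans (Cardinal.mk_le_of_injective hFinj) hsig
  have hsplit := Cardinal.mk_sum_compl {p : K.S N | K.Algebraic p}
  calc Cardinal.mk (K.S N)
      = Cardinal.mk {p : K.S N // K.Algebraic p}
        + Cardinal.mk {p : K.S N // ¬ K.Algebraic p} := hsplit.symm
    _ ≤ lam + lam := add_le_add halg hna
    _ = lam := Cardinal.add_eq_self hlam
end
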